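/- For k ≥ 3 and 0 ≤ v < |I_{k-2}|, the Stern polynomials satisfy deg(B_{a_k + v}) = deg(B_{a_{k-2} + v}) + 1 and lc(B_{a_k + v}) = lc(B_{a_{k-2} + v}), where a_k denotes the smallest integer of NAF-bitlength k. -/
import Mathlib


open Polynomial in
/-- The Stern polynomial: `B 0 = 0`, `B 1 = 1`, `B (2n) = t * B n`, `B (2n+1) = B n + B (n+1)`. -/
noncomputable def sternP : ℕ → Polynomial ℕ
  | 0 => 0
  | 1 => 1
  | n + 2 =>
    if (n + 2) % 2 = 0 then X * sternP (n / 2 + 1)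
    else sternP (n / 2 + 1) + sternP (n / 2 + 2)
decreasing_by all_goals omega

/-- The digits of a BSD representation lie in {-1, 0, 1}. -/
def IsBSDDigits {i : ℕ} (b : Fin i → ℤ) : Prop := ∀ j, b j ∈ ({-1, 0, 1} : Set ℤ)

/-- The value represented by the digit string `b` (least significant digit `b 0`). -/
def bsdVal {i : ℕ} (b : Fin i → ℤ) : ℤ := ∑ j : Fin i, b j * 2 ^ (j : ℕ)

/-- `b` is a (not necessarily reduced) non-adjacent form digit string of length `k`:
digits in {-1,0,1}, no two adjacent digits both nonzero, and nonzero leading digit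
(when `k > 0`). -/
def IsReducedNAF {k : ℕ} (b : Fin k → ℤ) : Prop :=
  IsBSDDigits b ∧
  (∀ j : Fin k, ∀ h : (j : ℕ) + 1 < k, b j = 0 ∨ b ⟨(j : ℕ) + 1, h⟩ = 0) ∧
  (∀ h : 0 < k, b ⟨k - 1, Nat.sub_lt h one_pos⟩ ≠ 0)

/-- `m` has a reduced NAF representation of bitlength `k`. -/
def HasNAFLen (m : ℤ) (k : ℕ) : Prop :=
  ∃ b : Fin k → ℤ, IsReducedNAF b ∧ bsdVal b = m

/-- `I k`: the set of positive integers of NAF-bitlength `k`. -/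
def NAFInterval (k : ℕ) : Set ℕ := {n : ℕ | HasNAFLen (n : ℤ) k}

/-- `a k = min I k`: `a 1 = 1`, `a 2 = 2`, `a k = 2^(k-2) + a (k-2)`. -/
def aseq : ℕ → ℕ
  | 0 => 0
  | 1 => 1
  | 2 => 2
  | k + 3 => 2 ^ (k + 1) + aseq (k + 1)

/-- The NAF-bitlength of `n`. -/
noncomputable def nafLen (n : ℕ) : ℕ := sInf {k : ℕ | HasNAFLen (n : ℤ) k}

/-- The minimal Hamming weight of a BSD representation of `n` of length
equal to its NAF-bitlength. -/
noncomputable def minWeight (n : ℕ) : ℕ :=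
  sInf {w : ℕ | ∃ b : Fin (nafLen n) → ℤ,
    IsBSDDigits b ∧ bsdVal b = (n : ℤ) ∧ {j | b j ≠ 0}.ncard = w}

/-- `Z n`: the number of zeros in an optimal (minimal-weight) BSD representation of `n`
of length equal to its NAF-bitlength. -/
noncomputable def Zfun (n : ℕ) : ℕ := nafLen n - minWeight n

/-- `M n`: the number of optimal (minimal-weight) BSD representations of `n`
of length equal to its NAF-bitlength. -/
noncomputable def Mfun (n : ℕ) : ℕ :=
  {b : Fin (nafLen n) → ℤ |
    IsBSDDigits b ∧ bsdVal b = (n : ℤ) ∧ {j | b j ≠ 0}.ncard = minWeight n}.ncard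

open Polynomial

lemma sternP_two_mul (m : ℕ) : sternP (2*m) = X * sternP m := by
  cases m with
  | zero => simp [sternP]
  | succ m =>
    rw [show 2*(m+1) = 2*m + 2 by ring, sternP]
    have h1 : (2*m+2) % 2 = 0 := by omega
    have h2 : (2*m)/2 = m := by omega
    rw [h1]
    norm_num [h2]
lemma sternP_odd (m : ℕ) : sternP (2*m+1) = sternP m + sternP (m+1) := by
  cases m with
  | zero => simp [sternP]
  | succ m =>
    rw [show 2*(m+1)+1 = (2*m+1) + 2 by ring, sternP]
    have h1 : (2*m+1+2) % 2 = 1 := by omega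
    have h2 : (2*m+1)/2 = m := by omega
    rw [h1]
    norm_num [h2]

lemma sternP_one_le_eval (n : ℕ) (h : 1 ≤ n) : 1 ≤ (sternP n).eval 1 := by
  induction n using Nat.strong_induction_on with
  | _ n ih =>
    match n, h with
    | 1, _ => simp [sternP]
    | (n+2), _ =>
      rcases Nat.even_or_odd (n+2) with ⟨m, hm⟩ | ⟨m, hm⟩
      · have hm1 : 1 ≤ m := by omega
        rw [hm, show m + m = 2*m by ring, sternP_two_mul]
        simpa using ih m (by omega) hm1
      · rw [hm, sternP_odd]
        have := ih (m+1) (by omega) (by omega)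
        simp only [eval_add]
        omega

lemma sternP_ne_zero {n : ℕ} (h : 1 ≤ n) : sternP n ≠ 0 := by
  intro h0
  have := sternP_one_le_eval n h
  rw [h0] at this; simp at this

lemma add_dom {p q : Polynomial ℕ} (hq : q ≠ 0) (h : p.natDegree < q.natDegree) :
    (p+q).natDegree = q.natDegree ∧ (p+q).leadingCoeff = q.leadingCoeff := by
  have hc : (p+q).coeff q.natDegree = q.leadingCoeff := by
    rw [coeff_add, coeff_eq_zero_of_natDegree_lt h, zero_add, coeff_natDegree]
  have hne : (p+q).coeff q.natDegree ≠ 0 := by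
    rw [hc]; exact leadingCoeff_ne_zero.mpr hq
  have hle : (p+q).natDegree ≤ q.natDegree := by
    refine le_trans (natDegree_add_le p q) ?_; omega
  have hge : q.natDegree ≤ (p+q).natDegree := le_natDegree_of_ne_zero hne
  have hd : (p+q).natDegree = q.natDegree := le_antisymm hle hge
  exact ⟨hd, by rw [leadingCoeff, hd, hc]⟩

lemma add_deq {p q : Polynomial ℕ} (hp : p ≠ 0) (hq : q ≠ 0) (h : p.natDegree = q.natDegree) :
    (p+q).natDegree = q.natDegree ∧ (p+q).leadingCoeff = p.leadingCoeff + q.leadingCoeff := by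
  have hc : (p+q).coeff q.natDegree = p.leadingCoeff + q.leadingCoeff := by
    rw [coeff_add, coeff_natDegree, ← h, coeff_natDegree]
  have hne : (p+q).coeff q.natDegree ≠ 0 := by
    rw [hc]
    have := leadingCoeff_ne_zero.mpr hq
    omega
  have hle : (p+q).natDegree ≤ q.natDegree := by
    refine le_trans (natDegree_add_le p q) ?_; omega
  have hd : (p+q).natDegree = q.natDegree := le_antisymm hle (le_natDegree_of_ne_zero hne)
  exact ⟨hd, by rw [leadingCoeff, hd, hc]⟩

lemma X_mul_facts {p : Polynomial ℕ} (hp : p ≠ 0) :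
    (X*p).natDegree = p.natDegree + 1 ∧ (X*p).leadingCoeff = p.leadingCoeff := by
  constructor
  · rw [natDegree_mul X_ne_zero hp, natDegree_X]; omega
  · rw [leadingCoeff_mul, leadingCoeff_X, one_mul]


lemma aseq_rec (j : ℕ) (h : 1 ≤ j) : aseq (j+2) = 2^j + aseq j := by
  match j, h with
  | (m+1), _ => rfl

lemma aseq_pos (j : ℕ) (h : 1 ≤ j) : 1 ≤ aseq j := by
  induction j using Nat.strong_induction_on with
  | _ j ih =>
    match j, h with
    | 1, _ => simp [aseq]
    | 2, _ => simp [aseq]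
    | (m+3), _ =>
      rw [show m+3 = (m+1)+2 by ring, aseq_rec (m+1) (by omega)]
      have := ih (m+1) (by omega) (by omega)
      have : 1 ≤ 2^(m+1) := Nat.one_le_two_pow
      omega

lemma aseq_half (e : ℕ) (h : 1 ≤ e) : aseq (e+1) + (e+1) % 2 = 2 * aseq e := by
  induction e using Nat.strong_induction_on with
  | _ e ih =>
    match e, h with
    | 1, _ => simp [aseq]
    | 2, _ => simp [aseq]
    | (m+3), _ =>
      have h1 : aseq (m+3+1) = 2^(m+2) + aseq (m+2) := aseq_rec (m+2) (by omega)
      have h2 : aseq (m+3) = 2^(m+1) + aseq (m+1) := aseq_rec (m+1) (by omega)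
      have h3 : aseq (m+2) + (m+2) % 2 = 2 * aseq (m+1) := by
        have := ih (m+1) (by omega) (by omega)
        exact this
      have h4 : (m+3+1) % 2 = (m+1+1) % 2 := by omega
      rw [h1, h2, h4]
      have : 2^(m+2) = 2 * 2^(m+1) := by ring
      omega

lemma aseq_le (j : ℕ) (h : 1 ≤ j) : 2 * aseq j ≤ 2^j := by
  induction j using Nat.strong_induction_on with
  | _ j ih =>
    match j, h with
    | 1, _ => simp [aseq]
    | 2, _ => simp [aseq]
    | (m+3), _ =>
      rw [show m+3 = (m+1)+2 by ring, aseq_rec (m+1) (by omega)]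
      have := ih (m+1) (by omega) (by omega)
      have h5 : 2^(m+3) = 4 * 2^(m+1) := by ring
      have h6 : (m+1)+2 = m+3 := by ring
      rw [h6]
      omega

lemma sternP_one' : sternP 1 = 1 := by simp [sternP]
lemma sternP_two' : sternP 2 = X := by
  rw [show (2:ℕ) = 2*1 by norm_num, sternP_two_mul, sternP_one', mul_one]

lemma sternP_SW (e : ℕ) (he : 1 ≤ e) :
    (sternP (aseq e - 1)).natDegree ≤ (sternP (aseq e)).natDegree ∧
    (e % 2 = 0 → (sternP (aseq e - 1)).natDegree < (sternP (aseq e)).natDegree) := by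
  induction e using Nat.strong_induction_on with
  | _ e ihe =>
    match e, he with
    | 1, _ =>
      refine ⟨?_, by omega⟩
      show (sternP (1-1)).natDegree ≤ (sternP 1).natDegree
      simp [sternP]
    | 2, _ =>
      have ha2 : aseq 2 = 2 := rfl
      rw [ha2, show (2:ℕ)-1 = 1 by norm_num, sternP_one', sternP_two',
        natDegree_one, natDegree_X]
      omega
    | (m+3), _ =>
      have hg1 : 1 ≤ m+2 := by omega
      have hhalf : aseq (m+3) + (m+3) % 2 = 2 * aseq (m+2) := aseq_half (m+2) hg1
      have ihg := ihe (m+2) (by omega) hg1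
      have hag : 1 ≤ aseq (m+2) := aseq_pos (m+2) hg1
      have hBg : sternP (aseq (m+2)) ≠ 0 := sternP_ne_zero hag
      by_cases hpar : (m+3) % 2 = 0
      · -- e even: aseq e = 2 * aseq (m+2)
        have hae : aseq (m+3) = 2 * aseq (m+2) := by omega
        have hBe : sternP (aseq (m+3)) = X * sternP (aseq (m+2)) := by
          rw [hae, sternP_two_mul]
        have hdeg := (X_mul_facts hBg).1
        have hsum : sternP (aseq (m+3) - 1)
            = sternP (aseq (m+2) - 1) + sternP (aseq (m+2)) := by
          rw [show aseq (m+3) - 1 = 2*(aseq (m+2) - 1) + 1 by omega, sternP_odd,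
            show aseq (m+2) - 1 + 1 = aseq (m+2) by omega]
        have hle : (sternP (aseq (m+3) - 1)).natDegree ≤ (sternP (aseq (m+2))).natDegree := by
          rw [hsum]
          exact le_trans (natDegree_add_le _ _) (max_le ihg.1 le_rfl)
        refine ⟨?_, fun _ => ?_⟩ <;> (rw [hBe, hdeg]; omega)
      · -- e odd
        have hpar' : (m+3) % 2 = 1 := by omega
        have hgpar : (m+2) % 2 = 0 := by omega
        have hag2 : 2 ≤ aseq (m+2) := by
          have h1 : aseq (m+2) + (m+2) % 2 = 2 * aseq (m+1) := aseq_half (m+1) (by omega)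
          have := aseq_pos (m+1) (by omega)
          omega
        have hae : aseq (m+3) = 2 * (aseq (m+2) - 1) + 1 := by omega
        have hstrict := ihg.2 hgpar
        have hBe : sternP (aseq (m+3)) = sternP (aseq (m+2) - 1) + sternP (aseq (m+2)) := by
          rw [hae, sternP_odd, show aseq (m+2) - 1 + 1 = aseq (m+2) by omega]
        have hdom := add_dom hBg hstrict
        have hBe1 : sternP (aseq (m+3) - 1) = X * sternP (aseq (m+2) - 1) := by
          rw [show aseq (m+3) - 1 = 2*(aseq (m+2) - 1) by omega, sternP_two_mul]
        have hne1 : sternP (aseq (m+2) - 1) ≠ 0 := sternP_ne_zero (by omega)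
        refine ⟨?_, by omega⟩
        rw [hBe1, (X_mul_facts hne1).1, hBe, hdom.1]
        omega

lemma keyP (e : ℕ) (he : 1 ≤ e) : ∀ n, aseq e ≤ n → n ≤ 2^e →
    (sternP (2^e + n)).natDegree = (sternP n).natDegree + 1 ∧
    (sternP (2^e + n)).leadingCoeff = (sternP n).leadingCoeff := by
  induction e using Nat.strong_induction_on with
  | _ e ih =>
    intro n hlo hhi
    match e, he with
    | 1, _ =>
      have h1 : 1 ≤ n := by
        have : aseq 1 = 1 := rfl
        omega
      have h2 : n ≤ 2 := by simpa using hhi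
      have s3 : sternP 3 = 1 + X := by
        rw [show (3:ℕ) = 2*1+1 by norm_num, sternP_odd, sternP_one', sternP_two']
      have s4 : sternP 4 = X * X := by
        rw [show (4:ℕ) = 2*2 by norm_num, sternP_two_mul, sternP_two']
      interval_cases n
      · have hd := add_dom (p := (1 : Polynomial ℕ)) X_ne_zero
          (by rw [natDegree_one, natDegree_X]; omega)
        rw [show 2^1 + 1 = 3 by norm_num, s3, sternP_one']
        rw [natDegree_one]
        refine ⟨by rw [hd.1, natDegree_X], ?_⟩
        rw [hd.2, leadingCoeff_X, leadingCoeff_one]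
      · have hX := X_mul_facts (p := (X : Polynomial ℕ)) X_ne_zero
        rw [show 2^1 + 2 = 4 by norm_num, s4, sternP_two']
        rw [hX.1, hX.2, natDegree_X]
        exact ⟨rfl, rfl⟩
    | (m+2), _ =>
      have hg1 : 1 ≤ m+1 := by omega
      have hhalf : aseq (m+2) + (m+2) % 2 = 2 * aseq (m+1) := aseq_half (m+1) hg1
      have hpow : (2:ℕ)^(m+2) = 2*2^(m+1) := by ring
      have hag : 1 ≤ aseq (m+1) := aseq_pos (m+1) hg1
      rcases Nat.mod_two_eq_zero_or_one n with hn | hn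
      · -- n even
        obtain ⟨t, rfl⟩ : ∃ t, n = 2*t := ⟨n/2, by omega⟩
        have h1 : aseq (m+1) ≤ t := by omega
        have h2 : t ≤ 2^(m+1) := by omega
        have IH := ih (m+1) (by omega) hg1 t h1 h2
        have e1 : sternP (2*t) = X * sternP t := sternP_two_mul t
        have e2 : sternP (2^(m+2) + 2*t) = X * sternP (2^(m+1) + t) := by
          rw [show 2^(m+2) + 2*t = 2*(2^(m+1) + t) by rw [hpow]; ring, sternP_two_mul]
        have hzt : sternP t ≠ 0 := sternP_ne_zero (by omega)
        have hzT : sternP (2^(m+1) + t) ≠ 0 :=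
          sternP_ne_zero (le_trans Nat.one_le_two_pow (Nat.le_add_right _ _))
        have f1 := X_mul_facts hzt
        have f2 := X_mul_facts hzT
        rw [e1, e2, f1.1, f1.2, f2.1, f2.2]
        exact ⟨by omega, IH.2⟩
      · -- n odd
        obtain ⟨t, rfl⟩ : ∃ t, n = 2*t+1 := ⟨n/2, by omega⟩
        have h2 : t + 1 ≤ 2^(m+1) := by omega
        have h1 : aseq (m+1) ≤ t + 1 := by omega
        have e1 : sternP (2*t+1) = sternP t + sternP (t+1) := sternP_odd t
        have e2 : sternP (2^(m+2) + (2*t+1))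
            = sternP (2^(m+1) + t) + sternP (2^(m+1) + t + 1) := by
          rw [show 2^(m+2) + (2*t+1) = 2*(2^(m+1) + t) + 1 by rw [hpow]; ring, sternP_odd]
        have IH2 := ih (m+1) (by omega) hg1 (t+1) h1 h2
        have hz1 : sternP (t+1) ≠ 0 := sternP_ne_zero (by omega)
        have hzT1 : sternP (2^(m+1) + t + 1) ≠ 0 := sternP_ne_zero (by omega)
        have hT1 : 2^(m+1) + (t+1) = 2^(m+1) + t + 1 := by ring
        rw [hT1] at IH2
        by_cases hc : aseq (m+1) ≤ t
        · have IH1 := ih (m+1) (by omega) hg1 t hc (by omega)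
          have hzt : sternP t ≠ 0 := sternP_ne_zero (by omega)
          have hzT : sternP (2^(m+1) + t) ≠ 0 :=
            sternP_ne_zero (le_trans Nat.one_le_two_pow (Nat.le_add_right _ _))
          rcases lt_trichotomy (sternP t).natDegree (sternP (t+1)).natDegree with hlt | heq | hgt
          · have d1 := add_dom hz1 hlt
            have d2 := add_dom (p := sternP (2^(m+1)+t)) hzT1 (by omega)
            rw [e1, e2, d1.1, d1.2, d2.1, d2.2]
            exact ⟨by omega, IH2.2⟩
          · have d1 := add_deq hzt hz1 heq
            have d2 := add_deq hzT hzT1 (by omega)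
            rw [e1, e2, d1.1, d1.2, d2.1, d2.2]
            exact ⟨by omega, by rw [IH1.2, IH2.2]⟩
          · have d1 := add_dom (p := sternP (t+1)) hzt hgt
            have d2 := add_dom (p := sternP (2^(m+1)+t+1)) hzT (by omega)
            rw [e1, e2, add_comm (sternP t), add_comm (sternP (2^(m+1)+t)), d1.1, d1.2, d2.1, d2.2]
            exact ⟨by omega, IH1.2⟩
        · -- boundary: t + 1 = aseq (m+1)
          have ht1 : t + 1 = aseq (m+1) := by omega
          have hodd : (m+2) % 2 = 1 := by omega
          have SW1 := (sternP_SW (m+1) hg1).2 (by omega)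
          rw [show aseq (m+1) - 1 = t by omega, ← ht1] at SW1
          have ha3 : aseq (m+3) = 2^(m+1) + aseq (m+1) := aseq_rec (m+1) hg1
          have SW2 := (sternP_SW (m+3) (by omega)).2 (by omega)
          rw [ha3, show 2^(m+1) + aseq (m+1) - 1 = 2^(m+1) + t by omega,
            show 2^(m+1) + aseq (m+1) = 2^(m+1) + t + 1 by omega] at SW2
          have d1 := add_dom hz1 SW1
          have d2 := add_dom hzT1 SW2
          rw [e1, e2, d1.1, d1.2, d2.1, d2.2]
          exact ⟨by omega, IH2.2⟩

lemma geom_bound (m : ℕ) : ∑ i : Fin m, (2:ℤ)^(i:ℕ) = 2^m - 1 := by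
  rw [Fin.sum_univ_eq_sum_range]
  induction m with
  | zero => simp
  | succ n ih => rw [Finset.sum_range_succ, ih]; ring

lemma naf_bound (j : ℕ) (hj : 1 ≤ j) {v : ℕ} (hv : v < (NAFInterval j).ncard) :
    aseq j + v ≤ 2^j := by
  match j, hj with
  | 1, _ =>
    have hsub : NAFInterval 1 ⊆ {1} := by
      rintro n ⟨b, ⟨hd, _, hl⟩, hval⟩
      have hb0 : b 0 ≠ 0 := hl one_pos
      have hmem := hd 0
      have hval' : (n : ℤ) = b 0 := by
        rw [← hval, bsdVal, Fin.sum_univ_one]; simp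
      have hn : (0:ℤ) ≤ (n:ℤ) := Int.natCast_nonneg n
      simp only [Set.mem_insert_iff, Set.mem_singleton_iff] at hmem
      have : b 0 = 1 := by rcases hmem with h|h|h <;> omega
      have : n = 1 := by omega
      simp [this]
    have hle : (NAFInterval 1).ncard ≤ 1 := by
      have := Set.ncard_le_ncard hsub (Set.finite_singleton 1)
      simpa using this
    have : v = 0 := by omega
    simp [this, aseq]
  | 2, _ =>
    have hsub : NAFInterval 2 ⊆ {2} := by
      rintro n ⟨b, ⟨hd, hadj, hl⟩, hval⟩
      have hb1 : b 1 ≠ 0 := hl two_pos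
      have hb0 : b 0 = 0 := by
        rcases hadj 0 (by omega) with h | h
        · exact h
        · exact absurd h hb1
      have hmem := hd 1
      have hval' : (n : ℤ) = b 0 + b 1 * 2 := by
        rw [← hval, bsdVal, Fin.sum_univ_two]; simp
      have hn : (0:ℤ) ≤ (n:ℤ) := Int.natCast_nonneg n
      simp only [Set.mem_insert_iff, Set.mem_singleton_iff] at hmem
      have : b 1 = 1 := by rcases hmem with h|h|h <;> omega
      have : n = 2 := by omega
      simp [this]
    have hle : (NAFInterval 2).ncard ≤ 1 := by
      have := Set.ncard_le_ncard hsub (Set.finite_singleton 2)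
      simpa using this
    have : v = 0 := by omega
    simp [this, aseq]
  | (m+3), _ =>
    have hsub : NAFInterval (m+3) ⊆ ↑(Finset.Icc (2^(m+1)+1) (2^(m+2)+2^(m+1)-1)) := by
      rintro n ⟨b, ⟨hd, hadj, hl⟩, hval⟩
      have htop : b ⟨m+2, by omega⟩ ≠ 0 := hl (by omega)
      have hmid : b ⟨m+1, by omega⟩ = 0 := by
        rcases hadj ⟨m+1, by omega⟩ (by simp) with h | h
        · exact h
        · exact absurd h htop
      set T : ℤ := ∑ i : Fin (m+1), b (Fin.castSucc (Fin.castSucc i)) * 2^(i:ℕ) with hT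
      have hsplit : (n:ℤ) = T + b ⟨m+1, by omega⟩ * 2^(m+1) + b ⟨m+2, by omega⟩ * 2^(m+2) := by
        rw [← hval, bsdVal, Fin.sum_univ_castSucc, Fin.sum_univ_castSucc]
        simp [Fin.coe_castSucc, Fin.val_last, Fin.last, Fin.castSucc, Fin.castAdd, Fin.castLE]
        rfl
      have habs : |T| ≤ 2^(m+1) - 1 := by
        calc |T| ≤ ∑ i : Fin (m+1), |b (Fin.castSucc (Fin.castSucc i)) * 2^(i:ℕ)| :=
              Finset.abs_sum_le_sum_abs _ _
        _ ≤ ∑ i : Fin (m+1), (2:ℤ)^(i:ℕ) := by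
              refine Finset.sum_le_sum fun i _ => ?_
              rw [abs_mul, abs_pow]
              have hmem := hd (Fin.castSucc (Fin.castSucc i))
              simp only [Set.mem_insert_iff, Set.mem_singleton_iff] at hmem
              have : |b (Fin.castSucc (Fin.castSucc i))| ≤ 1 := by
                rcases hmem with h|h|h <;> simp [h]
              calc |b (Fin.castSucc (Fin.castSucc i))| * |(2:ℤ)|^(i:ℕ)
                  ≤ 1 * |(2:ℤ)|^(i:ℕ) := by
                    apply mul_le_mul_of_nonneg_right this (by positivity)
                _ = 2^(i:ℕ) := by simp
        _ = 2^(m+1) - 1 := geom_bound (m+1)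
      have habs' := abs_le.mp habs
      have hmemtop := hd ⟨m+2, by omega⟩
      simp only [Set.mem_insert_iff, Set.mem_singleton_iff] at hmemtop
      have hpow2 : (2:ℤ)^(m+2) = 2*2^(m+1) := by ring
      have hn0 : (0:ℤ) ≤ (n:ℤ) := Int.natCast_nonneg n
      have hbtop : b ⟨m+2, by omega⟩ = 1 := by
        rcases hmemtop with h|h|h
        · rw [h, hmid] at hsplit; exfalso; omega
        · exact absurd h htop
        · exact h
      rw [hbtop, hmid] at hsplit
      simp only [Finset.coe_Icc, Set.mem_Icc]
      have hc1 : ((2^(m+1) : ℕ) : ℤ) = 2^(m+1) := by push_cast; ring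
      have hc2 : ((2^(m+2) : ℕ) : ℤ) = 2^(m+2) := by push_cast; ring
      constructor
      · omega
      · omega
    have hcard : (NAFInterval (m+3)).ncard ≤ 2^(m+2) - 1 := by
      have h1 := Set.ncard_le_ncard hsub (Finset.Icc _ _).finite_toSet
      rw [Set.ncard_coe_finset, Nat.card_Icc] at h1
      have h2 : 1 ≤ 2^(m+1) := Nat.one_le_two_pow
      have h3 : (2:ℕ)^(m+2) = 2*2^(m+1) := by ring
      omega
    have h4 := aseq_le (m+3) (by omega)
    have h5 : (2:ℕ)^(m+3) = 2*2^(m+2) := by ring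
    omega

theorem stern_deg_lc_A (k v : ℕ) (hk : 3 ≤ k)
    (hv : v < (NAFInterval (k - 2)).ncard) :
    (sternP (aseq k + v)).natDegree = (sternP (aseq (k - 2) + v)).natDegree + 1 ∧
    (sternP (aseq k + v)).leadingCoeff = (sternP (aseq (k - 2) + v)).leadingCoeff := by
  obtain ⟨j, rfl⟩ : ∃ j, k = j + 2 := ⟨k - 2, by omega⟩
  have hj : 1 ≤ j := by omega
  have hks : j + 2 - 2 = j := by omega
  rw [hks] at hv ⊢
  have hb : aseq j + v ≤ 2 ^ j := naf_bound j hj hv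
  have hrec : aseq (j + 2) = 2 ^ j + aseq j := aseq_rec j hj
  have hkey := keyP j hj (aseq j + v) (Nat.le_add_right _ _) hb
  rw [hrec, add_assoc]
  exact hkey
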